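/- arXiv:1209.5669 — 3 statements merged into one kernel-verified Lean document; each statement's English description precedes it below -/
import Mathlib

section
/- Every analytic subset of a Polish space is either countable or has cardinality 2^{ℵ₀}. -/
open MeasureTheory Cardinal Set Function Topology

/-- In a second countable space, an uncountable set has two distinct condensation points
belonging to the set. -/
lemma aux_condensation {Y : Type*} [TopologicalSpace Y] [SecondCountableTopology Y]
    {T : Set Y} (hT : ¬T.Countable) :
    ∃ y₀ ∈ T, ∃ y₁ ∈ T, y₀ ≠ y₁ ∧ (∀ U ∈ nhds y₀, ¬(T ∩ U).Countable) ∧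
      ∀ U ∈ nhds y₁, ¬(T ∩ U).Countable := by
  classical
  set K := {y : Y | ∀ U ∈ nhds y, ¬(T ∩ U).Countable} with hK
  obtain ⟨b, b_count, -, hb⟩ := TopologicalSpace.exists_countable_basis Y
  have h1 : (T \ K).Countable := by
    have hsub : T \ K ⊆ ⋃ s ∈ {s ∈ b | (T ∩ s).Countable}, T ∩ s := by
      rintro y ⟨hyT, hyK⟩
      simp only [hK, mem_setOf_eq, not_forall, not_not, exists_prop] at hyK
      obtain ⟨U, hU, hUc⟩ := hyK
      obtain ⟨s, hs, hys, hsU⟩ := hb.mem_nhds_iff.1 hU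
      exact mem_biUnion ⟨hs, hUc.mono (inter_subset_inter_right _ hsU)⟩ ⟨hyT, hys⟩
    exact Countable.mono hsub
      ((b_count.mono (sep_subset _ _)).biUnion fun s hs => hs.2)
  have h2 : ¬(T ∩ K).Countable := by
    intro h
    exact hT (Countable.mono (fun y hy => by
      by_cases hyK : y ∈ K
      · exact Or.inr ⟨hy, hyK⟩
      · exact Or.inl ⟨hy, hyK⟩) (h1.union h))
  have h3 : (T ∩ K).Nontrivial := by
    by_contra h
    rw [Set.not_nontrivial_iff] at h
    exact h2 h.countable
  obtain ⟨y₀, hy₀, y₁, hy₁, hne⟩ := h3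
  exact ⟨y₀, hy₀.1, y₁, hy₁.1, hne, hy₀.2, hy₁.2⟩

/-- Splitting lemma: a set with uncountable image under a continuous map contains two closed
subsets of small diameter, still with uncountable images, whose image closures are disjoint. -/
lemma aux_split {X Y : Type*} [MetricSpace X] [TopologicalSpace.SeparableSpace X]
    [MetricSpace Y] [SecondCountableTopology Y]
    {f : X → Y} (hf : Continuous f) (S : Set X) (hS : IsClosed S)
    (hunc : ¬(f '' S).Countable) (ε : ℝ) (hε : 0 < ε) :
    ∃ S₀ S₁ : Set X, IsClosed S₀ ∧ IsClosed S₁ ∧ S₀ ⊆ S ∧ S₁ ⊆ S ∧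
      ¬(f '' S₀).Countable ∧ ¬(f '' S₁).Countable ∧
      EMetric.diam S₀ ≤ ENNReal.ofReal ε ∧ EMetric.diam S₁ ≤ ENNReal.ofReal ε ∧
      Disjoint (closure (f '' S₀)) (closure (f '' S₁)) := by
  obtain ⟨y₀, -, y₁, -, hne, h₀, h₁⟩ := aux_condensation hunc
  have hd : 0 < dist y₀ y₁ := dist_pos.2 hne
  set r : ℝ := dist y₀ y₁ / 3 with hr_def
  have hr : 0 < r := by positivity
  -- key step: around a condensation point, find a small closed set with uncountable image
  have key : ∀ y : Y, (∀ U ∈ nhds y, ¬((f '' S) ∩ U).Countable) →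
      ∃ E : Set X, IsClosed E ∧ E ⊆ S ∧ ¬(f '' E).Countable ∧
        EMetric.diam E ≤ ENNReal.ofReal ε ∧ closure (f '' E) ⊆ Metric.closedBall y r := by
    intro y hy
    have hW : ¬((f '' S) ∩ Metric.ball y r).Countable :=
      hy _ (Metric.ball_mem_nhds y hr)
    set P : Set X := S ∩ f ⁻¹' Metric.ball y r with hP_def
    have hPimg : f '' P = (f '' S) ∩ Metric.ball y r := Set.image_inter_preimage f S _
    obtain ⟨c, c_count, c_dense⟩ := TopologicalSpace.exists_countable_dense X
    have hcover : P ⊆ ⋃ x ∈ c, Metric.closedBall x (ε / 3) := by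
      intro z hz
      obtain ⟨x, hxz, hxc⟩ := Metric.dense_iff.1 c_dense z (ε / 3) (by positivity)
      exact mem_biUnion hxc (by
        rw [Metric.mem_closedBall, dist_comm]
        exact le_of_lt (Metric.mem_ball.1 hxz))
    have himg_cover : f '' P ⊆ ⋃ x ∈ c, f '' (P ∩ Metric.closedBall x (ε / 3)) := by
      rintro _ ⟨z, hz, rfl⟩
      obtain ⟨U, ⟨x, rfl⟩, hU⟩ := hcover hz
      simp only [mem_iUnion, exists_prop] at hU ⊢
      obtain ⟨hxc, hzx⟩ := hU
      exact ⟨x, hxc, mem_image_of_mem f ⟨hz, hzx⟩⟩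
    have hex : ∃ x ∈ c, ¬(f '' (P ∩ Metric.closedBall x (ε / 3))).Countable := by
      by_contra h
      push_neg at h
      apply hW
      rw [← hPimg]
      exact Countable.mono himg_cover (c_count.biUnion h)
    obtain ⟨x, -, hx⟩ := hex
    set B : Set X := P ∩ Metric.closedBall x (ε / 3) with hB_def
    refine ⟨closure B, isClosed_closure, ?_, ?_, ?_, ?_⟩
    · exact closure_minimal (fun z hz => hz.1.1) hS
    · intro h
      exact hx (h.mono (image_mono subset_closure))
    · rw [show EMetric.diam (closure B) = EMetric.diam B from Metric.ediam_closure B]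
      refine EMetric.diam_le fun a ha b hb => ?_
      rw [edist_dist]
      refine le_trans (ENNReal.ofReal_le_ofReal ?_) le_rfl
      calc dist a b ≤ dist a x + dist x b := dist_triangle a x b
        _ ≤ ε / 3 + ε / 3 := by
            refine add_le_add (Metric.mem_closedBall.1 ha.2) ?_
            rw [dist_comm]; exact Metric.mem_closedBall.1 hb.2
        _ ≤ ε := by linarith
    · have h1 : f '' closure B ⊆ closure (f '' B) := image_closure_subset_closure_image hf
      have h2 : f '' B ⊆ Metric.ball y r := by
        refine Subset.trans (image_mono inter_subset_left) ?_
        rw [hPimg]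
        exact inter_subset_right
      calc closure (f '' closure B) ⊆ closure (closure (f '' B)) := closure_mono h1
        _ = closure (f '' B) := closure_closure
        _ ⊆ closure (Metric.ball y r) := closure_mono h2
        _ ⊆ Metric.closedBall y r := Metric.closure_ball_subset_closedBall
  obtain ⟨E₀, hE₀cl, hE₀sub, hE₀unc, hE₀diam, hE₀ball⟩ := key y₀ h₀
  obtain ⟨E₁, hE₁cl, hE₁sub, hE₁unc, hE₁diam, hE₁ball⟩ := key y₁ h₁
  refine ⟨E₀, E₁, hE₀cl, hE₁cl, hE₀sub, hE₁sub, hE₀unc, hE₁unc, hE₀diam, hE₁diam, ?_⟩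
  refine Disjoint.mono hE₀ball hE₁ball ?_
  apply Metric.closedBall_disjoint_closedBall
  rw [hr_def]
  linarith

/-- Every analytic subset of a Polish space is either countable or has cardinality `2^ℵ₀`. -/
theorem analytic_countable_or_continuum
    {Y : Type*} [TopologicalSpace Y] [PolishSpace Y]
    (A : Set Y) (hA : AnalyticSet A) :
    A.Countable ∨ Cardinal.mk ↥A = 2 ^ Cardinal.aleph0 := by
  classical
  by_cases hAc : A.Countable
  · exact Or.inl hAc
  right
  rw [AnalyticSet] at hA
  rcases hA with rfl | ⟨f, f_cont, f_range⟩
  · exact absurd countable_empty hAc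
  letI := TopologicalSpace.upgradeIsCompletelyMetrizable Y
  letI := TopologicalSpace.upgradeIsCompletelyMetrizable (ℕ → ℕ)
  -- the root set has uncountable image
  have unc_univ : ¬(f '' (univ : Set (ℕ → ℕ))).Countable := by
    rwa [image_univ, f_range]
  -- splitting chooser
  choose S0 S1 h0cl h1cl h0sub h1sub h0unc h1unc h0diam h1diam hdisj using
    fun (S : Set (ℕ → ℕ)) (hS : IsClosed S) (hunc : ¬(f '' S).Countable) (ε : ℝ) (hε : 0 < ε) =>
      aux_split f_cont S hS hunc ε hε
  have upos : ∀ n : ℕ, (0 : ℝ) < (1 / 2) ^ n := fun n => by positivity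
  let P := Subtype fun E : Set (ℕ → ℕ) => IsClosed E ∧ ¬(f '' E).Countable
  let DP : List Bool → P := fun l => by
    induction' l with a l ih
    · exact ⟨univ, isClosed_univ, unc_univ⟩
    cases a
    · exact ⟨S0 ih.val ih.property.1 ih.property.2 ((1 / 2) ^ (l.length + 1)) (upos _),
        h0cl _ _ _ _ _, h0unc _ _ _ _ _⟩
    · exact ⟨S1 ih.val ih.property.1 ih.property.2 ((1 / 2) ^ (l.length + 1)) (upos _),
        h1cl _ _ _ _ _, h1unc _ _ _ _ _⟩
  let D : List Bool → Set (ℕ → ℕ) := fun l => (DP l).val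
  have hanti : CantorScheme.ClosureAntitone D := by
    refine CantorScheme.Antitone.closureAntitone ?_ fun l => (DP l).property.1
    intro l a
    cases a
    · exact h0sub _ _ _ _ _
    · exact h1sub _ _ _ _ _
  have hdiam : CantorScheme.VanishingDiam D := by
    intro x
    have htend : Filter.Tendsto (fun n : ℕ => ENNReal.ofReal ((1 / 2 : ℝ) ^ n))
        Filter.atTop (nhds 0) := by
      rw [show (0 : ENNReal) = ENNReal.ofReal 0 by simp]
      exact (ENNReal.continuous_ofReal.tendsto 0).comp
        (tendsto_pow_atTop_nhds_zero_of_lt_one (by norm_num) (by norm_num))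
    apply tendsto_of_tendsto_of_tendsto_of_le_of_le' tendsto_const_nhds htend
    · simp
    · rw [Filter.eventually_atTop]
      refine ⟨1, fun m hm => ?_⟩
      rcases Nat.exists_eq_succ_of_ne_zero (by omega : m ≠ 0) with ⟨n, rfl⟩
      rw [PiNat.res_succ]
      cases x n
      · exact (h0diam _ _ _ _ _).trans_eq (by rw [PiNat.res_length])
      · exact (h1diam _ _ _ _ _).trans_eq (by rw [PiNat.res_length])
  have hnonempty : ∀ l, (D l).Nonempty := by
    intro l
    rcases eq_empty_or_nonempty (D l) with h | h
    · exfalso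
      apply (DP l).property.2
      rw [show (DP l).val = D l from rfl, h, image_empty]
      exact countable_empty
    · exact h
  have hdom : ∀ x : ℕ → Bool, x ∈ (CantorScheme.inducedMap D).1 := by
    intro x
    rw [hanti.map_of_vanishingDiam hdiam hnonempty]
    exact mem_univ x
  -- the image-disjointness of siblings
  have hdisjY : ∀ l : List Bool,
      Disjoint (closure (f '' D (false :: l))) (closure (f '' D (true :: l))) := fun l =>
    hdisj _ _ _ _ _
  -- the injection from Cantor space into A
  let g : (ℕ → Bool) → Y := fun x => f ((CantorScheme.inducedMap D).2 ⟨x, hdom x⟩)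
  have hgA : ∀ x, g x ∈ A := fun x => by
    rw [← f_range]; exact mem_range_self _
  have hg_inj : Function.Injective g := by
    intro x y hxy
    by_contra hne
    have hex : ∃ n, x n ≠ y n := by
      by_contra h
      push_neg at h
      exact hne (funext h)
    set n := Nat.find hex with hn_def
    have hxn : x n ≠ y n := Nat.find_spec hex
    have hres : PiNat.res x n = PiNat.res y n := by
      rw [PiNat.res_eq_res]
      intro m hm
      by_contra hme
      exact Nat.find_min hex hm hme
    have hx : (CantorScheme.inducedMap D).2 ⟨x, hdom x⟩ ∈ D (x n :: PiNat.res x n) := by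
      have := CantorScheme.map_mem (A := D) ⟨x, hdom x⟩ (n + 1)
      rwa [PiNat.res_succ] at this
    have hy : (CantorScheme.inducedMap D).2 ⟨y, hdom y⟩ ∈ D (y n :: PiNat.res x n) := by
      have := CantorScheme.map_mem (A := D) ⟨y, hdom y⟩ (n + 1)
      rwa [PiNat.res_succ, ← hres] at this
    have hfx : g x ∈ closure (f '' D (x n :: PiNat.res x n)) :=
      subset_closure (mem_image_of_mem f hx)
    have hfy : g y ∈ closure (f '' D (y n :: PiNat.res x n)) :=
      subset_closure (mem_image_of_mem f hy)
    cases hxnv : x n <;> cases hynv : y n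
    · exact hxn (by rw [hxnv, hynv])
    · rw [hxnv] at hfx; rw [hynv] at hfy
      exact (hdisjY (PiNat.res x n)).ne_of_mem hfx hfy hxy
    · rw [hxnv] at hfx; rw [hynv] at hfy
      exact (hdisjY (PiNat.res x n)).ne_of_mem hfy hfx hxy.symm
    · exact hxn (by rw [hxnv, hynv])
  -- cardinality computations
  have hboolnat : (#(ℕ → Bool)) = Cardinal.continuum := by
    rw [← Cardinal.power_def, Cardinal.mk_bool, Cardinal.mk_nat, Cardinal.two_power_aleph0]
  have hnatnat : (#(ℕ → ℕ)) = Cardinal.continuum := by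
    rw [← Cardinal.power_def, Cardinal.mk_nat, Cardinal.aleph0_power_aleph0]
  have hup : #↥A ≤ Cardinal.continuum := by
    rw [← f_range]
    have h := Cardinal.mk_range_le_lift (f := f)
    rw [hnatnat, Cardinal.lift_continuum, Cardinal.lift_uzero] at h
    exact h
  have hdown : Cardinal.continuum ≤ #↥A := by
    have hemb : Nonempty ((ℕ → Bool) ↪ ↥A) :=
      ⟨⟨fun x => ⟨g x, hgA x⟩, fun a b h => hg_inj (congrArg Subtype.val h)⟩⟩
    have h := Cardinal.lift_mk_le'.2 hemb
    rw [hboolnat, Cardinal.lift_continuum, Cardinal.lift_uzero] at h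
    exact h
  rw [Cardinal.two_power_aleph0]
  exact le_antisymm hup hdown
end

section
/- If a Büchi transition system T with countable state set is unambiguous (every σ ∈ Σ^ω has at most one accepting run), then the ω-language L(T) is a Borel subset of Σ^ω. -/
open MeasureTheory

/-- A nondeterministic Büchi transition system over input alphabet `S` with state set `Q`. -/
structure BuchiTS (S Q : Type*) where
  /-- the transition relation -/
  delta : Set (Q × S × Q)
  /-- the initial state -/
  init : Q
  /-- the set of final (accepting) states -/
  final : Set Q

/-- `ρ` is a run of `T` on the infinite word `σ`. -/
def BuchiTS.IsRun {S Q : Type*} (T : BuchiTS S Q) (σ : ℕ → S) (ρ : ℕ → Q) : Prop :=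
  ρ 0 = T.init ∧ ∀ i : ℕ, (ρ i, σ i, ρ (i + 1)) ∈ T.delta

/-- `ρ` is an accepting run of `T` on `σ`. -/
def BuchiTS.IsAcceptingRun {S Q : Type*} (T : BuchiTS S Q) (σ : ℕ → S) (ρ : ℕ → Q) : Prop :=
  T.IsRun σ ρ ∧ ∀ n : ℕ, ∃ i ≥ n, ρ i ∈ T.final

/-- If a Büchi transition system with countable state set is unambiguous (every `σ` has at most
one accepting run), then the ω-language it accepts is a Borel subset of `Σ^ω`. -/
theorem language_of_unambiguous_buchiTS_borel
    {S Q : Type*} [Fintype S] [Countable Q]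
    [TopologicalSpace S] [DiscreteTopology S] [TopologicalSpace Q] [DiscreteTopology Q]
    [MeasurableSpace (ℕ → S)] [BorelSpace (ℕ → S)]
    (T : BuchiTS S Q)
    (hunamb : ∀ (σ : ℕ → S) (ρ ρ' : ℕ → Q),
      T.IsAcceptingRun σ ρ → T.IsAcceptingRun σ ρ' → ρ = ρ') :
    MeasurableSet {σ : ℕ → S | ∃ ρ : ℕ → Q, T.IsAcceptingRun σ ρ} := by
  classical
  letI : MeasurableSpace S := borel S
  haveI : BorelSpace S := ⟨rfl⟩
  letI : MeasurableSpace Q := borel Q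
  haveI : BorelSpace Q := ⟨rfl⟩
  letI : MeasurableSpace (ℕ → Q) := borel _
  haveI : BorelSpace (ℕ → Q) := ⟨rfl⟩
  set R : Set ((ℕ → S) × (ℕ → Q)) := {p | T.IsAcceptingRun p.1 p.2} with hRdef
  have hR : MeasurableSet R := by
    have hEq : R = ({p : (ℕ → S) × (ℕ → Q) | p.2 0 = T.init} ∩
        ⋂ i : ℕ, {p : (ℕ → S) × (ℕ → Q) | (p.2 i, p.1 i, p.2 (i+1)) ∈ T.delta}) ∩
        ⋂ n : ℕ, ⋃ i : ℕ, ⋃ _ : i ≥ n, {p : (ℕ → S) × (ℕ → Q) | p.2 i ∈ T.final} := by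
      ext p
      simp only [hRdef, BuchiTS.IsAcceptingRun, BuchiTS.IsRun, Set.mem_setOf_eq,
        Set.mem_inter_iff, Set.mem_iInter, Set.mem_iUnion, exists_prop]
    rw [hEq]
    apply MeasurableSet.inter
    · apply MeasurableSet.inter
      · have hf : Measurable fun p : (ℕ → S) × (ℕ → Q) => p.2 0 := by fun_prop
        exact hf (measurableSet_singleton T.init)
      · apply MeasurableSet.iInter
        intro i
        have hf : Measurable fun p : (ℕ → S) × (ℕ → Q) => (p.2 i, p.1 i, p.2 (i+1)) := by
          fun_prop
        exact hf (Set.to_countable T.delta).measurableSet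
    · apply MeasurableSet.iInter
      intro n
      apply MeasurableSet.iUnion
      intro i
      apply MeasurableSet.iUnion
      intro _
      have hf : Measurable fun p : (ℕ → S) × (ℕ → Q) => p.2 i := by fun_prop
      exact hf (Set.to_countable T.final).measurableSet
  have hinj : Set.InjOn (Prod.fst : (ℕ → S) × (ℕ → Q) → ℕ → S) R := by
    intro p hp q hq h
    have h2 : p.2 = q.2 := by
      have := hunamb p.1 p.2 q.2 hp (h ▸ hq)
      exact this
    exact Prod.ext h h2
  have himg : {σ : ℕ → S | ∃ ρ : ℕ → Q, T.IsAcceptingRun σ ρ} = Prod.fst '' R := by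
    ext σ
    constructor
    · rintro ⟨ρ, hρ⟩; exact ⟨(σ, ρ), hρ, rfl⟩
    · rintro ⟨⟨σ', ρ⟩, hρ, rfl⟩; exact ⟨ρ, hρ⟩
  rw [himg]
  haveI : PolishSpace Q := inferInstance
  haveI : PolishSpace S := inferInstance
  exact hR.image_of_continuousOn_injOn continuous_fst.continuousOn hinj
end

section
/- Let Y be a Polish space and A ⊆ Y an uncountable analytic set. Then A contains a subset homeomorphic to the Cantor space {0,1}^ω; in particular A has cardinality 2^{ℵ₀}. -/
open MeasureTheory Cardinal

open Set Filter Function TopologicalSpace Topology MeasureTheory Cardinal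
open scoped ENNReal

lemma key_cond {X Y : Type*} [TopologicalSpace X] [SecondCountableTopology X] {f : X → Y}
    {s : Set X} (h : ¬(f '' s).Countable) :
    ¬(f '' {x | x ∈ s ∧ ∀ U ∈ 𝓝 x, ¬(f '' (U ∩ s)).Countable}).Countable := by
  intro hG
  apply h
  set G : Set X := {x | x ∈ s ∧ ∀ U ∈ 𝓝 x, ¬(f '' (U ∩ s)).Countable} with hGdef
  set 𝒞 : Set (Set X) := {W ∈ countableBasis X | (f '' (W ∩ s)).Countable} with h𝒞
  have hVs : s ⊆ G ∪ ⋃ W ∈ 𝒞, W := by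
    intro x hx
    by_cases hxG : x ∈ G
    · exact Or.inl hxG
    · right
      have : ∃ U ∈ 𝓝 x, (f '' (U ∩ s)).Countable := by
        by_contra hcon
        push_neg at hcon
        exact hxG ⟨hx, hcon⟩
      obtain ⟨U, hU, hUc⟩ := this
      obtain ⟨W, hWB, hxW, hWU⟩ := (isBasis_countableBasis X).mem_nhds_iff.mp hU
      exact mem_biUnion ⟨hWB, hUc.mono (image_mono (inter_subset_inter_left _ hWU))⟩ hxW
  have himg : f '' s ⊆ f '' G ∪ ⋃ W ∈ 𝒞, f '' (W ∩ s) := by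
    rintro y ⟨x, hx, rfl⟩
    rcases hVs hx with hxG | hxV
    · exact Or.inl (mem_image_of_mem f hxG)
    · obtain ⟨W, hW, hxW⟩ := mem_iUnion₂.mp hxV
      exact Or.inr (mem_biUnion hW ⟨x, ⟨hxW, hx⟩, rfl⟩)
  exact Countable.mono himg (hG.union
    (Countable.biUnion ((countable_countableBasis X).mono (sep_subset _ _)) fun W hW => hW.2))

lemma split_lemma {X Y : Type*} [MetricSpace X] [SecondCountableTopology X] [MetricSpace Y]
    {f : X → Y} (hf : Continuous f) {s : Set X} (hs : IsOpen s) (hunc : ¬(f '' s).Countable)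
    {ε : ℝ≥0∞} (hε : 0 < ε) :
    ∃ s₀ s₁ : Set X,
      (IsOpen s₀ ∧ ¬(f '' s₀).Countable ∧ closure s₀ ⊆ s ∧ EMetric.diam s₀ ≤ ε) ∧
      (IsOpen s₁ ∧ ¬(f '' s₁).Countable ∧ closure s₁ ⊆ s ∧ EMetric.diam s₁ ≤ ε) ∧
      Disjoint (f '' s₀) (f '' s₁) := by
  set G : Set X := {x | x ∈ s ∧ ∀ U ∈ 𝓝 x, ¬(f '' (U ∩ s)).Countable} with hGdef
  have hGunc := key_cond hunc
  have hnt : (f '' G).Nontrivial := by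
    by_contra hsub
    rw [not_nontrivial_iff] at hsub
    exact hGunc hsub.countable
  obtain ⟨y₀, ⟨x₀, hx₀, rfl⟩, y₁, ⟨x₁, hx₁, rfl⟩, hne⟩ := hnt
  set d := dist (f x₀) (f x₁) with hd
  have hdpos : 0 < d := dist_pos.mpr hne
  have key : ∀ x : X, x ∈ G →
      ∃ t : Set X, IsOpen t ∧ ¬(f '' t).Countable ∧ closure t ⊆ s ∧
        EMetric.diam t ≤ ε ∧ f '' t ⊆ Metric.ball (f x) (d / 3) := by
    intro x hx
    obtain ⟨r, hrpos, hrs⟩ := EMetric.mem_nhds_iff.mp (hs.mem_nhds hx.1)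
    set m : ℝ≥0∞ := min (min r 1) ε with hm
    set ρ : ℝ≥0∞ := m / 2 with hρ
    have hmpos : 0 < m := lt_min (lt_min hrpos zero_lt_one) hε
    have hmtop : m ≠ ⊤ :=
      ne_top_of_le_ne_top (by simp : (1 : ℝ≥0∞) ≠ ⊤) ((min_le_left _ _).trans (min_le_right _ _))
    have hρpos : 0 < ρ := ENNReal.div_pos hmpos.ne' (by simp)
    have hρlt : ρ < m := ENNReal.half_lt_self hmpos.ne' hmtop
    have hρr : ρ < r := hρlt.trans_le ((min_le_left _ _).trans (min_le_left _ _))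
    set t : Set X := EMetric.ball x ρ ∩ f ⁻¹' Metric.ball (f x) (d / 3) with ht
    have htopen : IsOpen t := EMetric.isOpen_ball.inter (Metric.isOpen_ball.preimage hf)
    have hxt : x ∈ t :=
      ⟨EMetric.mem_ball_self hρpos, Metric.mem_ball_self (by positivity)⟩
    have hts : t ⊆ s := fun z hz => hrs (EMetric.ball_subset_ball hρr.le hz.1)
    refine ⟨t, htopen, ?_, ?_, ?_, ?_⟩
    · have := hx.2 t (htopen.mem_nhds hxt)
      rwa [inter_eq_left.mpr hts] at this
    · have h1 : closure t ⊆ EMetric.closedBall x ρ :=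
        closure_minimal (fun z hz => EMetric.ball_subset_closedBall hz.1)
          Metric.isClosed_closedEBall
      refine h1.trans (fun z hz => hrs ?_)
      exact lt_of_le_of_lt hz hρr
    · refine le_trans (EMetric.diam_mono (inter_subset_left)) ?_
      refine le_trans EMetric.diam_ball ?_
      rw [hρ, ENNReal.mul_div_cancel' (by simp) (by simp)]
      exact min_le_right _ _
    · exact image_subset_iff.mpr inter_subset_right
  obtain ⟨t₀, h₀o, h₀u, h₀c, h₀d, h₀b⟩ := key x₀ hx₀
  obtain ⟨t₁, h₁o, h₁u, h₁c, h₁d, h₁b⟩ := key x₁ hx₁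
  refine ⟨t₀, t₁, ⟨h₀o, h₀u, h₀c, h₀d⟩, ⟨h₁o, h₁u, h₁c, h₁d⟩, ?_⟩
  refine Disjoint.mono h₀b h₁b (Metric.ball_disjoint_ball ?_)
  rw [← hd]
  linarith

open CantorScheme in
lemma exists_nat_bool_inj_of_image {X Y : Type*} [MetricSpace X] [CompleteSpace X]
    [SecondCountableTopology X] [MetricSpace Y]
    {f : X → Y} (hf : Continuous f) (hunc : ¬(range f).Countable) :
    ∃ g : (ℕ → Bool) → Y, range g ⊆ range f ∧ Continuous g ∧ Injective g := by
  obtain ⟨u, -, upos', hu⟩ := exists_seq_strictAnti_tendsto' (zero_lt_one' ℝ≥0∞)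
  have upos := fun n => (upos' n).1
  let P := Subtype fun E : Set X => IsOpen E ∧ ¬(f '' E).Countable
  choose C0 C1 h0 h1 hdisj using
    fun {E : Set X} (hE : IsOpen E) (hunc : ¬(f '' E).Countable) {ε : ℝ≥0∞} (hε : 0 < ε) =>
    split_lemma hf hE hunc hε
  let DP : List Bool → P := fun l => by
    induction' l with a l ih
    · exact ⟨univ, isOpen_univ, by rwa [image_univ]⟩
    cases a
    · use C0 ih.property.1 ih.property.2 (upos (l.length + 1))
      exact ⟨(h0 _ _ _).1, (h0 _ _ _).2.1⟩
    use C1 ih.property.1 ih.property.2 (upos (l.length + 1))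
    exact ⟨(h1 _ _ _).1, (h1 _ _ _).2.1⟩
  let D : List Bool → Set X := fun l => (DP l).val
  have hanti : ClosureAntitone D := by
    intro l a
    cases a
    · exact (h0 _ _ _).2.2.1
    exact (h1 _ _ _).2.2.1
  have hdiam : VanishingDiam D := by
    intro x
    apply tendsto_of_tendsto_of_tendsto_of_le_of_le' tendsto_const_nhds hu
    · simp
    rw [eventually_atTop]
    refine ⟨1, fun m (hm : 1 ≤ m) => ?_⟩
    rw [Nat.one_le_iff_ne_zero] at hm
    rcases Nat.exists_eq_succ_of_ne_zero hm with ⟨n, rfl⟩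
    simp only [PiNat.res_succ, Nat.succ_eq_add_one]
    dsimp only [D]
    rw [show n + 1 = (PiNat.res x n).length + 1 by rw [PiNat.res_length]]
    cases x n
    · exact (h0 _ _ _).2.2.2
    · exact (h1 _ _ _).2.2.2
  have hnonempty : ∀ l, (D l).Nonempty := by
    intro l
    rcases (D l).eq_empty_or_nonempty with h | h
    · exfalso
      apply (DP l).property.2
      rw [show (DP l).val = D l from rfl, h, image_empty]
      exact countable_empty
    exact h
  have hdom : ∀ {x : ℕ → Bool}, x ∈ (inducedMap D).1 := fun {x} => by
    rw [hanti.map_of_vanishingDiam hdiam hnonempty]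
    apply mem_univ
  have hdisj' : ∀ (l : List Bool) (a b : Bool), a ≠ b →
      Disjoint (f '' D (a :: l)) (f '' D (b :: l)) := by
    rintro l (_ | _) (_ | _) hab <;> try contradiction
    · exact hdisj _ _ _
    exact (hdisj _ _ _).symm
  refine ⟨fun x => f ((inducedMap D).2 ⟨x, hdom⟩), ?_, ?_, ?_⟩
  · rintro y ⟨x, rfl⟩
    exact mem_range_self _
  · exact hf.comp (hdiam.map_continuous.comp (by continuity))
  intro x y hxy
  dsimp only at hxy
  have hres : ∀ n, PiNat.res x n = PiNat.res y n := by
    intro n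
    induction' n with n ih
    · simp
    rw [PiNat.res_succ, PiNat.res_succ, ih]
    congr 1
    by_contra hne
    have m1 : f ((inducedMap D).2 ⟨x, hdom⟩) ∈ f '' D (x n :: PiNat.res y n) := by
      rw [← ih, ← PiNat.res_succ]
      exact mem_image_of_mem f (map_mem ⟨x, hdom⟩ (n + 1))
    have m2 : f ((inducedMap D).2 ⟨y, hdom⟩) ∈ f '' D (y n :: PiNat.res y n) := by
      rw [← PiNat.res_succ]
      exact mem_image_of_mem f (map_mem ⟨y, hdom⟩ (n + 1))
    rw [hxy] at m1
    exact (hdisj' (PiNat.res y n) (x n) (y n) hne).ne_of_mem m1 m2 rfl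
  exact PiNat.res_injective (funext hres)

/-- Perfect set theorem for analytic sets: an uncountable analytic subset `A` of a Polish space
contains a subset homeomorphic to the Cantor space `{0,1}^ω`; in particular `A` has
cardinality `2^ℵ₀`. -/
theorem uncountable_analytic_contains_cantor
    {Y : Type*} [TopologicalSpace Y] [PolishSpace Y]
    (A : Set Y) (hA : AnalyticSet A) (hunc : ¬ A.Countable) :
    (∃ C : Set Y, C ⊆ A ∧ Nonempty ((ℕ → Bool) ≃ₜ ↥C)) ∧
      Cardinal.mk ↥A = 2 ^ Cardinal.aleph0 := by
  rw [MeasureTheory.AnalyticSet] at hA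
  rcases hA with rfl | ⟨f, hf, rfl⟩
  · exact absurd countable_empty hunc
  obtain ⟨g, hgrange, hgcont, hginj⟩ := by
    letI := upgradeIsCompletelyMetrizable Y
    letI := upgradeIsCompletelyMetrizable (ℕ → ℕ)
    exact exists_nat_bool_inj_of_image hf hunc
  constructor
  · refine ⟨range g, hgrange, ⟨Topology.IsEmbedding.toHomeomorph (f := g) ?_⟩⟩
    exact (hgcont.isClosedEmbedding hginj).toIsEmbedding
  · have hle : Cardinal.mk ↥(range f) ≤ 2 ^ Cardinal.aleph0 := by
      have h1 := Cardinal.mk_range_le_lift (f := f)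
      have h2 : Cardinal.mk (ℕ → ℕ) = 2 ^ Cardinal.aleph0 := by
        rw [Cardinal.mk_arrow]
        simp [Cardinal.power_self_eq le_rfl]
      rw [h2] at h1
      simpa using h1
    have hge : (2 : Cardinal) ^ Cardinal.aleph0 ≤ Cardinal.mk ↥(range f) := by
      have hemb : (ℕ → Bool) ↪ ↥(range f) :=
        ⟨fun x => ⟨g x, hgrange (mem_range_self x)⟩,
          fun a b hab => hginj (congrArg Subtype.val hab)⟩
      have h1 := Cardinal.lift_mk_le'.mpr ⟨hemb⟩
      have h2 : Cardinal.mk (ℕ → Bool) = 2 ^ Cardinal.aleph0 := by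
        rw [Cardinal.mk_arrow]
        simp
      rw [h2] at h1
      simpa using h1
    exact le_antisymm hle hge
end
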